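/- The sequence t_m = T_m(φ - φ^(-1)), where T_m(y) = Σ_{k=0}^{m} C(m+k, m-k) y^(2k) and φ > 0 is a fixed real, satisfies the recurrence t_{m+2} - (φ^2 + φ^(-2)) t_{m+1} + t_m = 0 for all natural numbers m. -/

import Mathlib

open Finset

private lemma binom_id (n k : ℕ) :
    (n + 2).choose (2 * k + 2) + n.choose (2 * k + 2)
      = 2 * (n + 1).choose (2 * k + 2) + n.choose (2 * k) := by
  have h1 : (n + 2).choose (2 * k + 2)
      = (n + 1).choose (2 * k + 1) + (n + 1).choose (2 * k + 2) :=
    Nat.choose_succ_succ (n + 1) (2 * k + 1)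
  have h2 : (n + 1).choose (2 * k + 1) = n.choose (2 * k) + n.choose (2 * k + 1) :=
    Nat.choose_succ_succ n (2 * k)
  have h3 : (n + 1).choose (2 * k + 2) = n.choose (2 * k + 1) + n.choose (2 * k + 2) :=
    Nat.choose_succ_succ n (2 * k + 1)
  omega

theorem t_recurrence (φ : ℝ) (hφ : 0 < φ)
    (t : ℕ → ℝ)
    (ht : ∀ m, t m = ∑ k ∈ range (m + 1),
      (Nat.choose (m + k) (m - k) : ℝ) * (φ - φ⁻¹) ^ (2 * k)) :
    ∀ m : ℕ, t (m + 2) - (φ ^ 2 + (φ⁻¹) ^ 2) * t (m + 1) + t m = 0 := by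
  intro m
  have hφ0 : φ ≠ 0 := ne_of_gt hφ
  have hmul : φ * φ⁻¹ = 1 := mul_inv_cancel₀ hφ0
  set y : ℝ := φ - φ⁻¹ with hy
  have hsq : φ ^ 2 + (φ⁻¹) ^ 2 = y ^ 2 + 2 := by
    rw [hy]; nlinarith [hmul]
  have key : ∀ n, n + 1 ≤ m + 4 → t n = ∑ k ∈ range (m + 4),
      (Nat.choose (n + k) (2 * k) : ℝ) * y ^ (2 * k) := by
    intro n hn
    rw [ht n]
    have step1 : (∑ k ∈ range (n + 1), (Nat.choose (n + k) (n - k) : ℝ) * y ^ (2 * k))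
        = ∑ k ∈ range (n + 1), (Nat.choose (n + k) (2 * k) : ℝ) * y ^ (2 * k) := by
      refine Finset.sum_congr rfl fun k hk => ?_
      have hk' : k ≤ n := Nat.lt_succ_iff.mp (Finset.mem_range.mp hk)
      have h1 : n + k - 2 * k = n - k := by omega
      rw [← h1, Nat.choose_symm (by omega)]
    rw [step1]
    refine Finset.sum_subset ?_ ?_
    · intro x hx
      simp only [Finset.mem_range] at *
      omega
    · intro x hx hx'
      simp only [Finset.mem_range, not_lt] at hx hx'
      rw [Nat.choose_eq_zero_of_lt (by omega)]
      simp
  rw [key (m + 2) (by omega), key (m + 1) (by omega), key m (by omega), hsq]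
  have hsplit : (y ^ 2 + 2) * ∑ k ∈ range (m + 4), (Nat.choose (m + 1 + k) (2 * k) : ℝ) * y ^ (2 * k)
      = (∑ k ∈ range (m + 4), (Nat.choose (m + 1 + k) (2 * k) : ℝ) * (y ^ 2 * y ^ (2 * k)))
        + (∑ k ∈ range (m + 4), 2 * ((Nat.choose (m + 1 + k) (2 * k) : ℝ) * y ^ (2 * k))) := by
    rw [← Finset.sum_add_distrib, Finset.mul_sum]
    refine Finset.sum_congr rfl fun k _ => ?_
    ring
  rw [hsplit]
  -- drop last term of the shifted sum (it is zero)
  have hlast : (∑ k ∈ range (m + 4), (Nat.choose (m + 1 + k) (2 * k) : ℝ) * (y ^ 2 * y ^ (2 * k)))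
      = ∑ k ∈ range (m + 3), (Nat.choose (m + 1 + k) (2 * k) : ℝ) * (y ^ 2 * y ^ (2 * k)) := by
    rw [Finset.sum_range_succ]
    rw [Nat.choose_eq_zero_of_lt (by omega)]
    simp
  rw [hlast]
  have hA := Finset.sum_range_succ' (fun k => (Nat.choose (m + 2 + k) (2 * k) : ℝ) * y ^ (2 * k)) (m + 3)
  have hC := Finset.sum_range_succ' (fun k => (Nat.choose (m + k) (2 * k) : ℝ) * y ^ (2 * k)) (m + 3)
  have hB := Finset.sum_range_succ' (fun k => 2 * ((Nat.choose (m + 1 + k) (2 * k) : ℝ) * y ^ (2 * k))) (m + 3)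
  rw [hA, hC, hB]
  simp only [Nat.add_zero, Nat.mul_zero, pow_zero, mul_one, Nat.choose_zero_right, Nat.cast_one]
  have main : (∑ k ∈ range (m + 3), (Nat.choose (m + 2 + (k + 1)) (2 * (k + 1)) : ℝ) * y ^ (2 * (k + 1)))
      + (∑ k ∈ range (m + 3), (Nat.choose (m + (k + 1)) (2 * (k + 1)) : ℝ) * y ^ (2 * (k + 1)))
      = (∑ k ∈ range (m + 3), (Nat.choose (m + 1 + k) (2 * k) : ℝ) * (y ^ 2 * y ^ (2 * k)))
        + ∑ k ∈ range (m + 3), 2 * ((Nat.choose (m + 1 + (k + 1)) (2 * (k + 1)) : ℝ) * y ^ (2 * (k + 1))) := by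
    rw [← Finset.sum_add_distrib, ← Finset.sum_add_distrib]
    refine Finset.sum_congr rfl fun k _ => ?_
    have hn : (m + 1 + k + 2).choose (2 * k + 2) + (m + 1 + k).choose (2 * k + 2)
        = 2 * (m + 1 + k + 1).choose (2 * k + 2) + (m + 1 + k).choose (2 * k) :=
      binom_id (m + 1 + k) k
    have hr : ((m + 1 + k + 2).choose (2 * k + 2) : ℝ) + ((m + 1 + k).choose (2 * k + 2) : ℝ)
        = 2 * ((m + 1 + k + 1).choose (2 * k + 2) : ℝ) + ((m + 1 + k).choose (2 * k) : ℝ) := by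
      exact_mod_cast hn
    rw [show m + 2 + (k + 1) = m + 1 + k + 2 by ring, show m + (k + 1) = m + 1 + k by ring,
        show m + 1 + (k + 1) = m + 1 + k + 1 by ring, show 2 * (k + 1) = 2 * k + 2 by ring]
    linear_combination y ^ (2 * k + 2) * hr
  linarith [main]
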